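/- In Schelling's segregation model with Markovian contagion on the N×N torus, every stochastically stable state is maximally segregated: if s = (x,e) ∈ Ω_k satisfies liminf_{β→∞} π_β(s) > 0, then the coloring x is maximally segregated. -/

import Mathlib

open Classical Filter Finset

noncomputable section

namespace Schelling

variable {V : Type*} [Fintype V] [DecidableEq V]

/-- A coloring assigns `+1` or `-1` to each vertex. -/
def IsColoring (x : V → ℤ) : Prop := ∀ v, x v = 1 ∨ x v = -1

/-- `wdeg G x i` : number of neighbors of `i` with the same color minus
the number of neighbors with the opposite color. -/
def wdeg (G : SimpleGraph V) (x : V → ℤ) (i : V) : ℤ :=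
  ((univ.filter fun j => G.Adj i j ∧ x j = x i).card : ℤ)
    - ((univ.filter fun j => G.Adj i j ∧ x j ≠ x i).card : ℤ)

/-- Utility of agent `i`. -/
def util (G : SimpleGraph V) (r : ℝ) (εc : V → ℝ) (x : V → ℤ) (i : V) : ℝ :=
  r * (wdeg G x i : ℝ) + εc i

/-- The potential `L`. -/
def potential (G : SimpleGraph V) (r : ℝ) (εc : V → ℝ) (x : V → ℤ) : ℝ :=
  ∑ i, util G r εc x i

/-- Number of bichromatic edges. -/
def bichromCount (G : SimpleGraph V) (x : V → ℤ) : ℕ :=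
  (G.edgeFinset.filter fun e =>
    Sym2.lift ⟨fun u v => x u ≠ x v, fun u v => by simp [ne_comm]⟩ e).card

/-- Number of monochromatic edges. -/
def monoCount (G : SimpleGraph V) (x : V → ℤ) : ℕ :=
  (G.edgeFinset.filter fun e =>
    Sym2.lift ⟨fun u v => x u = x v, fun u v => by simp [eq_comm]⟩ e).card

/-- Number of vertices colored `+1`. -/
def plusCount (x : V → ℤ) : ℕ := (univ.filter fun v => x v = 1).card

/-- A coloring is maximally segregated if it minimizes the number of bichromatic
edges among all colorings with the same number of `+1` vertices. -/
def MaximallySegregated (G : SimpleGraph V) (x : V → ℤ) : Prop :=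
  ∀ x' : V → ℤ, IsColoring x' → plusCount x' = plusCount x →
    bichromCount G x ≤ bichromCount G x'

/-- Exchange the values of a coloring at `i` and `j`. -/
def swap (x : V → ℤ) (i j : V) : V → ℤ :=
  fun v => if v = i then x j else if v = j then x i else x v

/-- The resistance of activating pair `e' = (i,j)` in state `x` with outcome `x'`. -/
def resist (G : SimpleGraph V) (r : ℝ) (εc : V → ℝ)
    (x : V → ℤ) (e' : V × V) (x' : V → ℤ) : ℝ :=
  let y := swap x e'.1 e'.2
  let a := util G r εc x e'.1 + util G r εc x e'.2
  let b := util G r εc y e'.1 + util G r εc y e'.2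
  if x' = x then max 0 (b - a) else max 0 (a - b)

/-- The `N × N` torus. -/
def torus (N : ℕ) : SimpleGraph (ZMod N × ZMod N) where
  Adj u v := u ≠ v ∧
    ((u.1 = v.1 ∧ (u.2 = v.2 + 1 ∨ v.2 = u.2 + 1)) ∨
     (u.2 = v.2 ∧ (u.1 = v.1 + 1 ∨ v.1 = u.1 + 1)))
  symm := ⟨by
    rintro u v ⟨hne, h⟩
    refine ⟨hne.symm, ?_⟩
    rcases h with ⟨h1, h2⟩ | ⟨h1, h2⟩
    · exact Or.inl ⟨h1.symm, h2.symm⟩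
    · exact Or.inr ⟨h1.symm, h2.symm⟩⟩
  loopless := ⟨fun v h => h.1 rfl⟩

/-- Markovian contagion scheduler. -/
def IsScheduler {W : Type*} [Fintype W] (D : (W × W) → (W × W) → ℝ) : Prop :=
  (∀ e e', 0 ≤ D e e') ∧ (∀ e, ∑ e', D e e' = 1) ∧ (∀ e, 0 < D e e) ∧
  (∀ e e', 0 < D e e' ↔ 0 < D e' e) ∧
  (∀ e e', Relation.ReflTransGen (fun a b => 0 < D a b) e e')

/-- One step transition probability of the chain `M_β`. -/
def kernel (G : SimpleGraph V) (r : ℝ) (εc : V → ℝ)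
    (D : (V × V) → (V × V) → ℝ) (β : ℝ) :
    ((V → ℤ) × (V × V)) → ((V → ℤ) × (V × V)) → ℝ :=
  fun s t =>
    let x := s.1; let x' := t.1; let e' := t.2
    let y := swap x e'.1 e'.2
    let a := util G r εc x e'.1 + util G r εc x e'.2
    let b := util G r εc y e'.1 + util G r εc y e'.2
    D s.2 e' *
      ((if x' = y then Real.exp (β * b) / (Real.exp (β * a) + Real.exp (β * b)) else 0)
       + (if x' = x then Real.exp (β * a) / (Real.exp (β * a) + Real.exp (β * b)) else 0))

/-- The finite set of all ±1 colorings of `V`. -/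
def colorings (V : Type*) [Fintype V] [DecidableEq V] : Finset (V → ℤ) :=
  Fintype.piFinset fun _ => ({1, -1} : Finset ℤ)

/-- The set `Ω_k` of states whose coloring has exactly `k` vertices colored `+1`. -/
def Omega (V : Type*) [Fintype V] [DecidableEq V] (k : ℕ) :
    Finset ((V → ℤ) × (V × V)) :=
  ((colorings V).filter fun x => plusCount x = k) ×ˢ (univ : Finset (V × V))

/-- `n`-step transition probabilities of a kernel restricted to a finite set `S` of states. -/
def kerpow {S : Type*} [DecidableEq S] (K : S → S → ℝ) (A : Finset S) : ℕ → S → S → ℝ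
  | 0 => fun s t => if s = t then 1 else 0
  | n + 1 => fun s t => ∑ u ∈ A, kerpow K A n s u * K u t

/-- An admissible transition of the segregation chain. -/
def Adm (D : (V × V) → (V × V) → ℝ)
    (s t : (V → ℤ) × (V × V)) : Prop :=
  0 < D s.2 t.2 ∧ (t.1 = s.1 ∨ t.1 = swap s.1 t.2.1 t.2.2)

/-- Resistance of a transition between states of the chain. -/
def tres (G : SimpleGraph V) (r : ℝ) (εc : V → ℝ)
    (s t : (V → ℤ) × (V × V)) : ℝ :=
  resist G r εc s.1 t.2 t.1

/-- `pathOK T a z l` : `l` is the list of successive vertices of a directed path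
from `a` to `z` using transitions from `T`. -/
def pathOK {S : Type*} (T : Set (S × S)) (a z : S) : List S → Prop
  | [] => a = z
  | b :: l => (a, b) ∈ T ∧ pathOK T b z l

/-- `T` is a tree (within the state set `A`) rooted at `z`. -/
def IsTreeRootedAt {S : Type*} (Adm : S → S → Prop) (A : Finset S)
    (T : Finset (S × S)) (z : S) : Prop :=
  (∀ p ∈ T, p.1 ∈ A ∧ p.2 ∈ A ∧ Adm p.1 p.2) ∧
  (∀ w ∈ A, w ≠ z → ∃! l : List S, pathOK (↑T : Set (S × S)) w z l)

/-- Resistance of a set of transitions. -/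
def treeRes {S : Type*} (ρ : S → S → ℝ) (T : Finset (S × S)) : ℝ :=
  ∑ p ∈ T, ρ p.1 p.2


/-! ### Auxiliary lemmas -/

section AuxLemmas

set_option linter.unusedSectionVars false
set_option maxHeartbeats 1000000

lemma swap_self (x : V → ℤ) (i : V) : swap x i i = x := by
  funext v; simp only [swap]; split <;> simp_all

lemma swap_apply_left (x : V → ℤ) (i j : V) : swap x i j i = x j := by simp [swap]

lemma swap_apply_right (x : V → ℤ) (i j : V) : swap x i j j = x i := by
  by_cases h : j = i <;> simp [swap, h]

lemma swap_apply_other (x : V → ℤ) {i j v : V} (h1 : v ≠ i) (h2 : v ≠ j) :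
    swap x i j v = x v := by simp [swap, h1, h2]

lemma swap_swap (x : V → ℤ) (i j : V) : swap (swap x i j) i j = x := by
  funext v
  by_cases h1 : v = i
  · subst h1; rw [swap_apply_left, swap_apply_right]
  · by_cases h2 : v = j
    · subst h2; rw [swap_apply_right, swap_apply_left]
    · rw [swap_apply_other _ h1 h2, swap_apply_other _ h1 h2]

lemma swap_eq_comp (x : V → ℤ) (i j : V) :
    swap x i j = x ∘ (Equiv.swap i j) := by
  funext v
  by_cases h1 : v = i
  · subst h1; simp [swap, Equiv.swap_apply_def]
  · by_cases h2 : v = j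
    · subst h2; simp [swap, Equiv.swap_apply_def, h1]
    · simp [swap, Equiv.swap_apply_def, h1, h2]

lemma plusCount_swap (x : V → ℤ) (i j : V) : plusCount (swap x i j) = plusCount x := by
  rw [swap_eq_comp, plusCount, plusCount]
  apply Finset.card_bij (fun v _ => Equiv.swap i j v)
  · intro a ha
    simp only [mem_filter, mem_univ, true_and, Function.comp] at ha ⊢
    exact ha
  · intro a _ b _ h
    exact (Equiv.swap i j).injective h
  · intro b hb
    refine ⟨Equiv.swap i j b, ?_, by simp⟩
    simp only [mem_filter, mem_univ, true_and, Function.comp] at hb ⊢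
    simpa using hb

lemma mem_colorings_iff (x : V → ℤ) : x ∈ colorings V ↔ ∀ v, x v = 1 ∨ x v = -1 := by
  simp [colorings, Fintype.mem_piFinset]

lemma swap_mem_colorings {x : V → ℤ} (hx : x ∈ colorings V) (i j : V) :
    swap x i j ∈ colorings V := by
  rw [mem_colorings_iff] at hx ⊢
  intro v
  simp only [swap]
  split
  · exact hx j
  · split
    · exact hx i
    · exact hx v

/-- Number of oppositely-colored neighbors of `v`. -/
def diffc (G : SimpleGraph V) (x : V → ℤ) (v : V) : ℕ :=
  (univ.filter fun w => G.Adj v w ∧ x w ≠ x v).card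

/-- Number of ordered bichromatic adjacent pairs. -/
def ocount (G : SimpleGraph V) (x : V → ℤ) : ℕ := ∑ v, diffc G x v

lemma diffc_eq_sum (G : SimpleGraph V) (x : V → ℤ) (v : V) :
    (diffc G x v : ℤ) = ∑ w, (if G.Adj v w ∧ x w ≠ x v then (1:ℤ) else 0) := by
  rw [diffc, Finset.card_filter]; push_cast; rfl

/-- The graph of bichromatic edges. -/
def bisub (G : SimpleGraph V) (x : V → ℤ) : SimpleGraph V where
  Adj u v := G.Adj u v ∧ x u ≠ x v
  symm := ⟨by rintro u v ⟨h1, h2⟩; exact ⟨h1.symm, Ne.symm h2⟩⟩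
  loopless := ⟨fun v h => h.2 rfl⟩

lemma bisub_degree (G : SimpleGraph V) (x : V → ℤ) (v : V) :
    (bisub G x).degree v = diffc G x v := by
  rw [SimpleGraph.degree, diffc]
  congr 1
  ext w
  rw [SimpleGraph.mem_neighborFinset]
  simp [SimpleGraph.mem_neighborFinset, bisub, ne_comm]

lemma bisub_edgeFinset (G : SimpleGraph V) (x : V → ℤ) :
    (bisub G x).edgeFinset = G.edgeFinset.filter
      (fun e => Sym2.lift ⟨fun u v => x u ≠ x v, fun u v => by simp [ne_comm]⟩ e) := by
  ext e
  induction e using Sym2.ind with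
  | _ u v =>
    rw [SimpleGraph.mem_edgeFinset]
    simp [SimpleGraph.mem_edgeFinset, SimpleGraph.mem_edgeSet, bisub]

lemma ocount_eq_twice_bichrom (G : SimpleGraph V) (x : V → ℤ) :
    ocount G x = 2 * bichromCount G x := by
  have h := SimpleGraph.sum_degrees_eq_twice_card_edges (bisub G x)
  rw [ocount]
  calc ∑ v, diffc G x v = ∑ v, (bisub G x).degree v :=
        Finset.sum_congr rfl fun v _ => (bisub_degree G x v).symm
    _ = 2 * (bisub G x).edgeFinset.card := h
    _ = 2 * bichromCount G x := by rw [bisub_edgeFinset]; rfl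

lemma ocount_swap_key (G : SimpleGraph V) (x : V → ℤ) (i j : V) (hij : i ≠ j) :
    (ocount G (swap x i j) : ℤ) - ocount G x
      = 2 * (((diffc G (swap x i j) i : ℤ) + diffc G (swap x i j) j)
              - ((diffc G x i : ℤ) + diffc G x j)) := by
  set y := swap x i j with hy
  set g : V → V → ℤ := fun v w =>
    (if G.Adj v w ∧ y w ≠ y v then (1:ℤ) else 0)
      - (if G.Adj v w ∧ x w ≠ x v then (1:ℤ) else 0) with hgdef
  have hdiff : ∀ v, (diffc G y v : ℤ) - diffc G x v = ∑ w, g v w := by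
    intro v
    rw [diffc_eq_sum, diffc_eq_sum, ← Finset.sum_sub_distrib]
  have hg0 : ∀ v w, v ≠ i → v ≠ j → w ≠ i → w ≠ j → g v w = 0 := by
    intro v w hv1 hv2 hw1 hw2
    simp only [hgdef, hy, swap_apply_other x hv1 hv2, swap_apply_other x hw1 hw2, sub_self]
  have hsymm : ∀ v w, g v w = g w v := by
    intro v w
    simp only [hgdef]
    congr 1
    · congr 1
      rw [eq_iff_iff]
      constructor <;> rintro ⟨h1, h2⟩ <;> exact ⟨h1.symm, h2.symm⟩
    · congr 1
      rw [eq_iff_iff]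
      constructor <;> rintro ⟨h1, h2⟩ <;> exact ⟨h1.symm, h2.symm⟩
  have hgii : ∀ v, g v v = 0 := by
    intro v
    simp [hgdef, G.irrefl]
  have hgij : g i j = 0 := by
    have h1 : (G.Adj i j ∧ y j ≠ y i) ↔ (G.Adj i j ∧ x j ≠ x i) := by
      rw [hy, swap_apply_right, swap_apply_left]
      constructor <;> rintro ⟨h1, h2⟩ <;> exact ⟨h1, h2.symm⟩
    simp only [hgdef]
    rw [if_congr h1 rfl rfl, sub_self]
  have hgji : g j i = 0 := by rw [hsymm]; exact hgij
  have hrowi : ∑ w ∈ ({i,j} : Finset V)ᶜ, g i w = ∑ w, g i w := by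
    rw [← Finset.sum_add_sum_compl ({i,j} : Finset V) (g i)]
    rw [Finset.sum_pair hij, hgii, hgij]
    ring
  have hrowj : ∑ w ∈ ({i,j} : Finset V)ᶜ, g j w = ∑ w, g j w := by
    rw [← Finset.sum_add_sum_compl ({i,j} : Finset V) (g j)]
    rw [Finset.sum_pair hij, hgji, hgii]
    ring
  have hmain : ∑ v, ∑ w, g v w = 2 * (∑ w, g i w + ∑ w, g j w) := by
    rw [← Finset.sum_add_sum_compl ({i,j} : Finset V) (fun v => ∑ w, g v w)]
    rw [Finset.sum_pair hij]
    have hcompl : ∀ v ∈ ({i,j} : Finset V)ᶜ, ∑ w, g v w = g v i + g v j := by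
      intro v hv
      rw [Finset.mem_compl, Finset.mem_insert, Finset.mem_singleton] at hv
      push_neg at hv
      rw [← Finset.sum_add_sum_compl ({i,j} : Finset V) (g v), Finset.sum_pair hij]
      have : ∑ w ∈ ({i,j} : Finset V)ᶜ, g v w = 0 := by
        apply Finset.sum_eq_zero
        intro w hw
        rw [Finset.mem_compl, Finset.mem_insert, Finset.mem_singleton] at hw
        push_neg at hw
        exact hg0 v w hv.1 hv.2 hw.1 hw.2
      rw [this, add_zero]
    rw [Finset.sum_congr rfl hcompl]
    have : ∑ v ∈ ({i,j} : Finset V)ᶜ, (g v i + g v j)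
        = ∑ v ∈ ({i,j} : Finset V)ᶜ, g i v + ∑ v ∈ ({i,j} : Finset V)ᶜ, g j v := by
      rw [← Finset.sum_add_distrib]
      exact Finset.sum_congr rfl fun v _ => by rw [hsymm v i, hsymm v j]
    rw [this, hrowi, hrowj]
    ring
  have hL : (ocount G y : ℤ) - ocount G x = ∑ v, ∑ w, g v w := by
    have h1 : (ocount G y : ℤ) - ocount G x = ∑ v, ((diffc G y v : ℤ) - diffc G x v) := by
      rw [ocount, ocount]
      push_cast
      rw [← Finset.sum_sub_distrib]
    rw [h1]
    exact Finset.sum_congr rfl fun v _ => hdiff v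
  rw [hL, hmain, ← hdiff i, ← hdiff j]
  ring

lemma wdeg_eq (G : SimpleGraph V) (x : V → ℤ) (v : V) :
    wdeg G x v = ((univ.filter fun w => G.Adj v w).card : ℤ) - 2 * diffc G x v := by
  have h := Finset.card_filter_add_card_filter_not
    (s := univ.filter fun w => G.Adj v w) (p := fun w => x w = x v)
  have e1 : (univ.filter fun w => G.Adj v w ∧ x w = x v)
      = (univ.filter fun w => G.Adj v w).filter (fun w => x w = x v) := by
    rw [Finset.filter_filter]
  have e2 : (univ.filter fun w => G.Adj v w ∧ x w ≠ x v)
      = (univ.filter fun w => G.Adj v w).filter (fun w => ¬ x w = x v) := by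
    rw [Finset.filter_filter]
  rw [wdeg, diffc, e1, e2]
  push_cast [← h]
  ring

lemma util_swap_identity (G : SimpleGraph V) (r : ℝ) (εc : V → ℝ) (x : V → ℤ) (i j : V) :
    (util G r εc (swap x i j) i + util G r εc (swap x i j) j)
      - (util G r εc x i + util G r εc x j)
    = r * ((ocount G x : ℝ) - (ocount G (swap x i j) : ℝ)) := by
  by_cases hij : i = j
  · subst hij; rw [swap_self]; ring
  · have key := ocount_swap_key G x i j hij
    set y := swap x i j with hy
    have hkey : ((ocount G x : ℝ) - ocount G y)
        = -2 * (((diffc G y i : ℝ) + diffc G y j) - ((diffc G x i : ℝ) + diffc G x j)) := by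
      have h2 : ((ocount G y : ℤ) : ℝ) - ((ocount G x : ℤ) : ℝ)
          = 2 * ((((diffc G y i : ℤ) : ℝ) + ((diffc G y j : ℤ) : ℝ))
              - (((diffc G x i : ℤ) : ℝ) + ((diffc G x j : ℤ) : ℝ))) := by
        rw [← Int.cast_sub]
        rw [key]
        push_cast
        ring
      push_cast at h2 ⊢
      linarith
    rw [util, util, util, util, wdeg_eq G y i, wdeg_eq G y j, wdeg_eq G x i, wdeg_eq G x j,
      hkey]
    push_cast
    ring

end AuxLemmas


section Chain

set_option linter.unusedSectionVars false
set_option maxHeartbeats 1000000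

variable (G : SimpleGraph V) (r : ℝ) (εc : V → ℝ) (β : ℝ)

/-- Sum of the utilities of the two members of a pair. -/
def usum (x : V → ℤ) (e : V × V) : ℝ := util G r εc x e.1 + util G r εc x e.2

/-- Acceptance probability. -/
def pacc (x : V → ℤ) (e : V × V) : ℝ :=
  Real.exp (β * usum G r εc (swap x e.1 e.2) e) /
    (Real.exp (β * usum G r εc x e) + Real.exp (β * usum G r εc (swap x e.1 e.2) e))

/-- Rejection probability. -/
def prej (x : V → ℤ) (e : V × V) : ℝ :=
  Real.exp (β * usum G r εc x e) /
    (Real.exp (β * usum G r εc x e) + Real.exp (β * usum G r εc (swap x e.1 e.2) e))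

lemma denom_pos (x : V → ℤ) (e : V × V) :
    0 < Real.exp (β * usum G r εc x e) + Real.exp (β * usum G r εc (swap x e.1 e.2) e) :=
  add_pos (Real.exp_pos _) (Real.exp_pos _)

lemma pacc_pos (x : V → ℤ) (e : V × V) : 0 < pacc G r εc β x e :=
  div_pos (Real.exp_pos _) (denom_pos G r εc β x e)

lemma prej_pos (x : V → ℤ) (e : V × V) : 0 < prej G r εc β x e :=
  div_pos (Real.exp_pos _) (denom_pos G r εc β x e)

lemma pacc_add_prej (x : V → ℤ) (e : V × V) : pacc G r εc β x e + prej G r εc β x e = 1 := by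
  rw [pacc, prej, ← add_div, add_comm, div_self (denom_pos G r εc β x e).ne']

lemma kernel_eq (D : (V × V) → (V × V) → ℝ) (u t : (V → ℤ) × (V × V)) :
    kernel G r εc D β u t
      = D u.2 t.2 * ((if t.1 = swap u.1 t.2.1 t.2.2 then pacc G r εc β u.1 t.2 else 0)
          + (if t.1 = u.1 then prej G r εc β u.1 t.2 else 0)) := rfl

lemma kernel_nonneg (D : (V × V) → (V × V) → ℝ) (hD0 : ∀ e e', 0 ≤ D e e')
    (u t : (V → ℤ) × (V × V)) : 0 ≤ kernel G r εc D β u t := by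
  rw [kernel_eq]
  apply mul_nonneg (hD0 _ _)
  apply add_nonneg
  · split
    · exact (pacc_pos G r εc β u.1 t.2).le
    · exact le_refl 0
  · split
    · exact (prej_pos G r εc β u.1 t.2).le
    · exact le_refl 0

/-- Gibbs weight of a coloring. -/
def gib (x : V → ℤ) : ℝ := Real.exp (-(β * r * (ocount G x : ℝ)))

lemma gib_pos (x : V → ℤ) : 0 < gib G r β x := Real.exp_pos _

/-- Detailed balance. -/
lemma balance (x' : V → ℤ) (e : V × V) :
    gib G r β (swap x' e.1 e.2) * Real.exp (β * usum G r εc x' e)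
      = gib G r β x' * Real.exp (β * usum G r εc (swap x' e.1 e.2) e) := by
  rw [gib, gib, ← Real.exp_add, ← Real.exp_add]
  congr 1
  have h : usum G r εc (swap x' e.1 e.2) e - usum G r εc x' e
      = r * ((ocount G x' : ℝ) - (ocount G (swap x' e.1 e.2) : ℝ)) := by
    simpa [usum] using util_swap_identity G r εc x' e.1 e.2
  linear_combination (-β) * h

end Chain


section Reach

set_option linter.unusedSectionVars false
set_option maxHeartbeats 1000000

variable (G : SimpleGraph V) (r : ℝ) (εc : V → ℝ) (β : ℝ)
variable (D : (V × V) → (V × V) → ℝ)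

lemma step_stay (hD0 : ∀ e e', 0 ≤ D e e') (x : V → ℤ) {e e' : V × V} (h : 0 < D e e') :
    0 < kernel G r εc D β (x, e) (x, e') := by
  rw [kernel_eq]
  apply mul_pos h
  have h1 : (0:ℝ) ≤ if (x : V → ℤ) = swap x e'.1 e'.2 then pacc G r εc β x e' else 0 := by
    split
    · exact (pacc_pos G r εc β x e').le
    · exact le_refl 0
  have h2 : (if (x : V → ℤ) = x then prej G r εc β x e' else 0) = prej G r εc β x e' :=
    if_pos rfl
  rw [h2]
  have := prej_pos G r εc β x e'
  linarith

lemma step_swap (hD0 : ∀ e e', 0 ≤ D e e') (x : V → ℤ) {e : V × V} (i j : V)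
    (h : 0 < D e (i, j)) :
    0 < kernel G r εc D β (x, e) (swap x i j, (i, j)) := by
  rw [kernel_eq]
  apply mul_pos h
  have h1 : (if swap x i j = swap x ((i,j) : V × V).1 ((i,j) : V × V).2
      then pacc G r εc β x (i,j) else 0) = pacc G r εc β x (i,j) := if_pos rfl
  have h2 : (0:ℝ) ≤ if swap x i j = x then prej G r εc β x (i,j) else 0 := by
    split
    · exact (prej_pos G r εc β x (i,j)).le
    · exact le_refl 0
  rw [h1]
  have := pacc_pos G r εc β x (i,j)
  linarith

/-- Reachability relation of the chain. -/
def Reach (u t : (V → ℤ) × (V × V)) : Prop :=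
  Relation.ReflTransGen (fun a b => 0 < kernel G r εc D β a b) u t

lemma reach_sched (hD : IsScheduler D) (x : V → ℤ) (e e' : V × V) :
    Reach G r εc β D (x, e) (x, e') := by
  have h := hD.2.2.2.2 e e'
  induction h with
  | refl => exact Relation.ReflTransGen.refl
  | tail _ hbc ih =>
      exact ih.tail (step_stay G r εc β D hD.1 x hbc)

lemma reach_swap (hD : IsScheduler D) (x : V → ℤ) (e : V × V) (i j : V) (e'' : V × V) :
    Reach G r εc β D (x, e) (swap x i j, e'') := by
  have h1 : Reach G r εc β D (x, e) (x, (i,j)) := reach_sched G r εc β D hD x e (i,j)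
  have h2 : Reach G r εc β D (x, (i,j)) (swap x i j, (i,j)) :=
    Relation.ReflTransGen.single (step_swap G r εc β D hD.1 x i j (hD.2.2.1 (i,j)))
  exact (h1.trans h2).trans (reach_sched G r εc β D hD (swap x i j) (i,j) e'')

lemma reach_of_eq (hD : IsScheduler D) {x xt : V → ℤ} (h : x = xt) (e et : V × V) :
    Reach G r εc β D (x, e) (xt, et) := by
  subst h
  exact reach_sched G r εc β D hD x e et

lemma reach_aux (hD : IsScheduler D) :
    ∀ (n : ℕ) (x xt : V → ℤ), x ∈ colorings V → xt ∈ colorings V →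
      plusCount x = plusCount xt →
      (univ.filter fun v => x v ≠ xt v).card ≤ n →
      ∀ e et, Reach G r εc β D (x, e) (xt, et) := by
  intro n
  induction n with
  | zero =>
      intro x xt _ _ _ hcard e et
      apply reach_of_eq G r εc β D hD _ e et
      funext v
      have h0 : (univ.filter fun v => x v ≠ xt v) = ∅ :=
        Finset.card_eq_zero.mp (Nat.le_zero.mp hcard)
      by_contra hne
      have : v ∈ (univ.filter fun v => x v ≠ xt v) := by
        simp only [mem_filter, mem_univ, true_and]
        exact hne
      rw [h0] at this
      exact absurd this (Finset.notMem_empty v)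
  | succ n ih =>
      intro x xt hx hxt hpc hcard e et
      set P := univ.filter fun v => x v ≠ xt v with hP
      by_cases hc0 : P.card = 0
      · apply reach_of_eq G r εc β D hD _ e et
        funext v
        have h0 : P = ∅ := Finset.card_eq_zero.mp hc0
        by_contra hne
        have : v ∈ P := by
          rw [hP]
          simp only [mem_filter, mem_univ, true_and]
          exact hne
        rw [h0] at this
        exact absurd this (Finset.notMem_empty v)
      · -- find i with x i = 1, j with x j = -1, both in P
        set A := P.filter fun v => x v = 1 with hA
        set Bf := P.filter fun v => ¬ x v = 1 with hB
        have hABcard : A.card + Bf.card = P.card :=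
          Finset.card_filter_add_card_filter_not (p := fun v => x v = 1)
        -- relate plusCounts
        have hsplitx : ((univ.filter fun v => x v = 1).filter fun v => v ∈ P).card
            + ((univ.filter fun v => x v = 1).filter fun v => v ∉ P).card
            = plusCount x :=
          Finset.card_filter_add_card_filter_not (p := fun v => v ∈ P)
        have hsplitxt : ((univ.filter fun v => xt v = 1).filter fun v => v ∈ P).card
            + ((univ.filter fun v => xt v = 1).filter fun v => v ∉ P).card
            = plusCount xt :=
          Finset.card_filter_add_card_filter_not (p := fun v => v ∈ P)
        have hoff : ((univ.filter fun v => x v = 1).filter fun v => v ∉ P)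
            = ((univ.filter fun v => xt v = 1).filter fun v => v ∉ P) := by
          ext v
          simp only [mem_filter, mem_univ, true_and, hP, not_not]
          constructor
          · rintro ⟨h1, h2⟩
            refine ⟨?_, h2⟩
            rwa [← h2]
          · rintro ⟨h1, h2⟩
            refine ⟨?_, h2⟩
            rwa [h2]
        have honx : ((univ.filter fun v => x v = 1).filter fun v => v ∈ P) = A := by
          ext v
          rw [hA]
          simp only [mem_filter, mem_univ, true_and]
          tauto
        have honxt : ((univ.filter fun v => xt v = 1).filter fun v => v ∈ P) = Bf := by
          ext v
          rw [hB]
          simp only [mem_filter, mem_univ, true_and]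
          constructor
          · rintro ⟨h1, h2⟩
            refine ⟨h2, ?_⟩
            have := (Finset.mem_filter.mp h2).2
            intro hx1
            rw [hx1, h1] at this
            exact this rfl
          · rintro ⟨h1, h2⟩
            refine ⟨?_, h1⟩
            have hne := (Finset.mem_filter.mp h1).2
            rcases (mem_colorings_iff xt).mp hxt v with h | h
            · exact h
            · exfalso
              rcases (mem_colorings_iff x).mp hx v with h' | h'
              · exact h2 h'
              · rw [h', h] at hne
                exact hne rfl
        have hAB : A.card = Bf.card := by
          rw [honx] at hsplitx
          rw [honxt] at hsplitxt
          rw [hoff] at hsplitx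
          omega
        have hAne : A.Nonempty := by
          rw [← Finset.card_pos]
          omega
        have hBne : Bf.Nonempty := by
          rw [← Finset.card_pos]
          omega
        obtain ⟨i, hi⟩ := hAne
        obtain ⟨j, hj⟩ := hBne
        rw [hA, Finset.mem_filter] at hi
        rw [hB, Finset.mem_filter] at hj
        have hxj : x j = -1 := by
          rcases (mem_colorings_iff x).mp hx j with h | h
          · exact absurd h hj.2
          · exact h
        have hij : i ≠ j := by
          intro h
          rw [h] at hi
          exact hj.2 hi.2
        have hxti : xt i = -1 := by
          have h1 : x i ≠ xt i := (Finset.mem_filter.mp hi.1).2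
          rcases (mem_colorings_iff xt).mp hxt i with h | h
          · exfalso; rw [hi.2, h] at h1; exact h1 rfl
          · exact h
        have hxtj : xt j = 1 := by
          have h1 : x j ≠ xt j := (Finset.mem_filter.mp hj.1).2
          rcases (mem_colorings_iff xt).mp hxt j with h | h
          · exact h
          · exfalso; rw [hxj, h] at h1; exact h1 rfl
        set y := swap x i j with hy
        have hyi : y i = -1 := by rw [hy, swap_apply_left, hxj]
        have hyj : y j = 1 := by rw [hy, swap_apply_right, hi.2]
        have hsub : (univ.filter fun v => y v ≠ xt v) ⊆ P.erase i := by
          intro v hv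
          rw [Finset.mem_filter] at hv
          have hvne : y v ≠ xt v := hv.2
          have hvi : v ≠ i := by
            intro h
            rw [h, hyi, hxti] at hvne
            exact hvne rfl
          have hvj : v ≠ j := by
            intro h
            rw [h, hyj, hxtj] at hvne
            exact hvne rfl
          rw [Finset.mem_erase]
          refine ⟨hvi, ?_⟩
          rw [hP, Finset.mem_filter]
          refine ⟨Finset.mem_univ v, ?_⟩
          rwa [hy, swap_apply_other x hvi hvj] at hvne
        have hcard' : (univ.filter fun v => y v ≠ xt v).card ≤ n := by
          have h1 := Finset.card_le_card hsub
          have h2 : (P.erase i).card = P.card - 1 :=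
            Finset.card_erase_of_mem hi.1
          omega
        have hstep : Reach G r εc β D (x, e) (y, (i, j)) :=
          reach_swap G r εc β D hD x e i j (i, j)
        have htail : Reach G r εc β D (y, (i, j)) (xt, et) := by
          apply ih y xt (swap_mem_colorings hx i j) hxt _ hcard' (i,j) et
          rw [hy, plusCount_swap]
          exact hpc
        exact hstep.trans htail

end Reach


section MainBound

set_option linter.unusedSectionVars false
set_option maxHeartbeats 4000000

/-- For any stationary distribution of the chain restricted to `Ω_k`, the mass of a state is
bounded by the ratio of Gibbs weights. -/
theorem pi_le_bound
    (G : SimpleGraph V) (r : ℝ) (εc : V → ℝ) (β : ℝ)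
    (D : (V × V) → (V × V) → ℝ) (hD : IsScheduler D) (k : ℕ)
    (P : ((V → ℤ) × (V × V)) → ℝ)
    (hpos : ∀ t, 0 ≤ P t)
    (hsum : ∑ t ∈ Omega V k, P t = 1)
    (hstat : ∀ t ∈ Omega V k, ∑ u ∈ Omega V k, P u * kernel G r εc D β u t = P t)
    (s : (V → ℤ) × (V × V)) (hs : s ∈ Omega V k)
    (x' : V → ℤ) (hx'c : x' ∈ colorings V) (hx'k : plusCount x' = k) :
    P s ≤ gib G r β s.1 / gib G r β x' := by
  classical
  set F : Finset (V → ℤ) := (colorings V).filter (fun x => plusCount x = k) with hFdef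
  have hΩ : Omega V k = F ×ˢ (univ : Finset (V × V)) := rfl
  have hmemF : ∀ (x : V → ℤ) (e : V × V), ((x, e) ∈ Omega V k ↔ x ∈ F) := by
    intro x e
    rw [hΩ, Finset.mem_product]
    simp
  have hx'F : x' ∈ F := by
    rw [hFdef, Finset.mem_filter]
    exact ⟨hx'c, hx'k⟩
  have hsF : s.1 ∈ F := by
    have := hs
    rw [hΩ, Finset.mem_product] at this
    exact this.1
  have hswapF : ∀ x ∈ F, ∀ (i j : V), swap x i j ∈ F := by
    intro x hx i j
    rw [hFdef, Finset.mem_filter] at hx ⊢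
    exact ⟨swap_mem_colorings hx.1 i j, by rw [plusCount_swap]; exact hx.2⟩
  -- the scheduler marginal
  set m : (V × V) → ℝ := fun e => ∑ x ∈ F, P (x, e) with hmdef
  have hm_nonneg : ∀ e, 0 ≤ m e := fun e => Finset.sum_nonneg fun x _ => hpos _
  have hm_sum : ∑ e, m e = 1 := by
    rw [← hsum, hΩ, Finset.sum_product, hmdef]
    exact Finset.sum_comm
  have hm_le_one : ∀ e, m e ≤ 1 := by
    intro e
    rw [← hm_sum]
    exact Finset.single_le_sum (fun e' _ => hm_nonneg e') (Finset.mem_univ e)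
  -- row sums of the kernel over a fiber
  have hrow : ∀ u ∈ Omega V k, ∀ e' : V × V,
      ∑ x' ∈ F, kernel G r εc D β u (x', e') = D u.2 e' := by
    intro u hu e'
    have hu1 : u.1 ∈ F := by
      have := hu
      rw [hΩ, Finset.mem_product] at this
      exact this.1
    have h1 : ∀ x' ∈ F, kernel G r εc D β u (x', e')
        = D u.2 e' * ((if x' = swap u.1 e'.1 e'.2 then pacc G r εc β u.1 e' else 0)
            + (if x' = u.1 then prej G r εc β u.1 e' else 0)) := by
      intro x' _
      rw [kernel_eq]
    rw [Finset.sum_congr rfl h1, ← Finset.mul_sum, Finset.sum_add_distrib,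
      Finset.sum_ite_eq' F (swap u.1 e'.1 e'.2) (fun _ => pacc G r εc β u.1 e'),
      Finset.sum_ite_eq' F u.1 (fun _ => prej G r εc β u.1 e'),
      if_pos (hswapF u.1 hu1 e'.1 e'.2), if_pos hu1, pacc_add_prej, mul_one]
  -- the scheduler marginal is stationary for `D`
  have hm_stat : ∀ e' : V × V, ∑ e, m e * D e e' = m e' := by
    intro e'
    have h1 : m e' = ∑ x' ∈ F, ∑ u ∈ Omega V k, P u * kernel G r εc D β u (x', e') := by
      rw [hmdef]
      exact Finset.sum_congr rfl fun x' hx' => (hstat (x', e') ((hmemF x' e').mpr hx')).symm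
    rw [h1, Finset.sum_comm]
    have h2 : ∀ u ∈ Omega V k,
        ∑ x' ∈ F, P u * kernel G r εc D β u (x', e') = P u * D u.2 e' := by
      intro u hu
      rw [← Finset.mul_sum, hrow u hu e']
    rw [Finset.sum_congr rfl h2, hΩ, Finset.sum_product, Finset.sum_comm]
    rw [hmdef]
    simp only [Finset.sum_mul]
  -- the scheduler marginal is positive
  have hm_pos : ∀ e, 0 < m e := by
    have hex : ∃ e0, 0 < m e0 := by
      by_contra hno
      push_neg at hno
      have : ∑ e, m e = 0 :=
        Finset.sum_eq_zero fun e _ => le_antisymm (hno e) (hm_nonneg e)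
      rw [hm_sum] at this
      exact one_ne_zero this
    obtain ⟨e0, he0⟩ := hex
    have hstep : ∀ e e', 0 < D e e' → 0 < m e → 0 < m e' := by
      intro e e' hDe hme
      have h1 : m e * D e e' ≤ ∑ ee, m ee * D ee e' :=
        Finset.single_le_sum (f := fun ee => m ee * D ee e')
          (fun ee _ => mul_nonneg (hm_nonneg ee) (hD.1 ee e')) (Finset.mem_univ e)
      rw [hm_stat e'] at h1
      exact lt_of_lt_of_le (mul_pos hme hDe) h1
    intro e
    have hconn := hD.2.2.2.2 e0 e
    induction hconn with
    | refl => exact he0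
    | tail _ hbc ih => exact hstep _ _ hbc ih
  -- the Gibbs partition function
  set Z : ℝ := ∑ x ∈ F, gib G r β x with hZdef
  have hZpos : 0 < Z :=
    Finset.sum_pos (fun x _ => gib_pos G r β x) ⟨s.1, hsF⟩
  have hZge : gib G r β x' ≤ Z :=
    Finset.single_le_sum (fun x _ => (gib_pos G r β x).le) hx'F
  -- the candidate stationary distribution
  set ρ : ((V → ℤ) × (V × V)) → ℝ := fun t => m t.2 * gib G r β t.1 / Z with hρdef
  have hρ_pos : ∀ t, 0 < ρ t := fun t =>
    div_pos (mul_pos (hm_pos t.2) (gib_pos G r β t.1)) hZpos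
  have hρ_sum : ∑ t ∈ Omega V k, ρ t = 1 := by
    rw [hΩ, Finset.sum_product, hρdef]
    have h1 : ∀ x ∈ F, ∑ e : V × V, m e * gib G r β x / Z = gib G r β x / Z := by
      intro x _
      rw [← Finset.sum_div, ← Finset.sum_mul, hm_sum, one_mul]
    rw [Finset.sum_congr rfl h1, ← Finset.sum_div, ← hZdef, div_self hZpos.ne']
  -- the fiber identity (detailed balance computation)
  have hfiber : ∀ xt ∈ F, ∀ e' : V × V,
      ∑ x ∈ F, gib G r β x * ((if xt = swap x e'.1 e'.2 then pacc G r εc β x e' else 0)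
          + (if xt = x then prej G r εc β x e' else 0)) = gib G r β xt := by
    intro xt hxt e'
    set z : V → ℤ := swap xt e'.1 e'.2 with hzdef
    have hzz : swap z e'.1 e'.2 = xt := swap_swap xt e'.1 e'.2
    have hzF : z ∈ F := hswapF xt hxt e'.1 e'.2
    have hiff : ∀ x : V → ℤ, (xt = swap x e'.1 e'.2) ↔ (x = z) := by
      intro x
      constructor
      · intro h
        rw [hzdef, h, swap_swap]
      · intro h
        rw [h, hzz]
    have hsplit : ∑ x ∈ F, gib G r β x
          * ((if xt = swap x e'.1 e'.2 then pacc G r εc β x e' else 0)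
            + (if xt = x then prej G r εc β x e' else 0))
        = (∑ x ∈ F, if x = z then gib G r β x * pacc G r εc β x e' else 0)
          + (∑ x ∈ F, if x = xt then gib G r β x * prej G r εc β x e' else 0) := by
      rw [← Finset.sum_add_distrib]
      apply Finset.sum_congr rfl
      intro x _
      rw [mul_add, mul_ite, mul_zero, mul_ite, mul_zero,
        if_congr (hiff x) rfl rfl, if_congr (eq_comm (a := xt) (b := x)) rfl rfl]
    rw [hsplit, Finset.sum_ite_eq' F z (fun x => gib G r β x * pacc G r εc β x e'),
      Finset.sum_ite_eq' F xt (fun x => gib G r β x * prej G r εc β x e'),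
      if_pos hzF, if_pos hxt]
    -- now the algebra
    have hbal := balance G r εc β xt e'
    rw [← hzdef] at hbal
    set Ea : ℝ := Real.exp (β * usum G r εc xt e') with hEa
    set Eb : ℝ := Real.exp (β * usum G r εc z e') with hEb
    have hpa : pacc G r εc β z e' = Ea / (Eb + Ea) := by
      rw [pacc, hzz, ← hEa, ← hEb]
    have hpr : prej G r εc β xt e' = Ea / (Ea + Eb) := by
      rw [prej, ← hzdef, ← hEa, ← hEb]
    have hd : (0:ℝ) < Ea + Eb := by
      rw [hEa, hEb]
      exact add_pos (Real.exp_pos _) (Real.exp_pos _)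
    rw [hpa, hpr, add_comm Eb Ea]
    have h2 : (gib G r β z + gib G r β xt) * Ea = gib G r β xt * (Ea + Eb) := by
      linear_combination hbal
    calc gib G r β z * (Ea / (Ea + Eb)) + gib G r β xt * (Ea / (Ea + Eb))
        = ((gib G r β z + gib G r β xt) * Ea) / (Ea + Eb) := by ring
      _ = (gib G r β xt * (Ea + Eb)) / (Ea + Eb) := by rw [h2]
      _ = gib G r β xt := mul_div_cancel_right₀ _ hd.ne'
  -- ρ is stationary
  have hρ_stat : ∀ t ∈ Omega V k, ∑ u ∈ Omega V k, ρ u * kernel G r εc D β u t = ρ t := by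
    rintro ⟨xt, e'⟩ ht
    have hxtF : xt ∈ F := (hmemF xt e').mp ht
    set A : (V → ℤ) → ℝ := fun x =>
      (if xt = swap x e'.1 e'.2 then pacc G r εc β x e' else 0)
        + (if xt = x then prej G r εc β x e' else 0) with hAdef
    have h1 : ∀ x ∈ F, ∀ e : V × V,
        ρ (x, e) * kernel G r εc D β (x, e) (xt, e')
          = (m e * D e e') * (gib G r β x * A x / Z) := by
      intro x _ e
      rw [hρdef, kernel_eq, hAdef]
      ring
    calc ∑ u ∈ Omega V k, ρ u * kernel G r εc D β u (xt, e')
        = ∑ x ∈ F, ∑ e : V × V, ρ (x, e) * kernel G r εc D β (x, e) (xt, e') := by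
          rw [hΩ, Finset.sum_product]
      _ = ∑ x ∈ F, ∑ e : V × V, (m e * D e e') * (gib G r β x * A x / Z) := by
          exact Finset.sum_congr rfl fun x hx => Finset.sum_congr rfl fun e _ => h1 x hx e
      _ = ∑ x ∈ F, (∑ e : V × V, m e * D e e') * (gib G r β x * A x / Z) := by
          exact Finset.sum_congr rfl fun x _ => by rw [Finset.sum_mul]
      _ = ∑ x ∈ F, m e' * (gib G r β x * A x / Z) := by
          rw [hm_stat e']
      _ = m e' * ((∑ x ∈ F, gib G r β x * A x) / Z) := by
          rw [← Finset.mul_sum, ← Finset.sum_div]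
      _ = m e' * (gib G r β xt / Z) := by
          rw [hfiber xt hxtF e']
      _ = ρ (xt, e') := by
          rw [hρdef]
          ring
  -- uniqueness: P = ρ on Ω
  obtain ⟨t0, ht0Ω, ht0min⟩ :=
    Finset.exists_min_image (Omega V k) (fun t => P t / ρ t) ⟨s, hs⟩
  set c : ℝ := P t0 / ρ t0 with hcdef
  set ν : ((V → ℤ) × (V × V)) → ℝ := fun t => P t - c * ρ t with hνdef
  have hν_nonneg : ∀ t ∈ Omega V k, 0 ≤ ν t := by
    intro t ht
    have h1 : c ≤ P t / ρ t := ht0min t ht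
    have h2 := (le_div_iff₀ (hρ_pos t)).mp h1
    show (0:ℝ) ≤ P t - c * ρ t
    linarith
  have hν_t0 : ν t0 = 0 := by
    rw [hνdef, hcdef]
    simp only
    rw [div_mul_cancel₀ _ (hρ_pos t0).ne']
    ring
  have hν_stat : ∀ t ∈ Omega V k, ∑ u ∈ Omega V k, ν u * kernel G r εc D β u t = ν t := by
    intro t ht
    rw [hνdef]
    simp only [sub_mul]
    rw [Finset.sum_sub_distrib, hstat t ht]
    have h1 : ∑ u ∈ Omega V k, c * ρ u * kernel G r εc D β u t
        = c * ∑ u ∈ Omega V k, ρ u * kernel G r εc D β u t := by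
      rw [Finset.mul_sum]
      exact Finset.sum_congr rfl fun u _ => by ring
    rw [h1, hρ_stat t ht]
  have hKnn : ∀ u t, 0 ≤ kernel G r εc D β u t := kernel_nonneg G r εc β D hD.1
  have hprop : ∀ t ∈ Omega V k, ν t = 0 →
      ∀ u ∈ Omega V k, 0 < kernel G r εc D β u t → ν u = 0 := by
    intro t ht hνt u hu hK
    have h1 : ∑ u ∈ Omega V k, ν u * kernel G r εc D β u t = 0 := by
      rw [hν_stat t ht, hνt]
    have h2 : ∀ w ∈ Omega V k, 0 ≤ ν w * kernel G r εc D β w t :=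
      fun w hw => mul_nonneg (hν_nonneg w hw) (hKnn w t)
    have h3 := (Finset.sum_eq_zero_iff_of_nonneg h2).mp h1 u hu
    rcases mul_eq_zero.mp h3 with h | h
    · exact h
    · exact absurd h hK.ne'
  have hsupport : ∀ u ∈ Omega V k, ∀ t, 0 < kernel G r εc D β u t → t ∈ Omega V k := by
    intro u hu t hK
    have hu1 : u.1 ∈ F := by
      have := hu
      rw [hΩ, Finset.mem_product] at this
      exact this.1
    rw [kernel_eq] at hK
    by_cases h1 : t.1 = swap u.1 t.2.1 t.2.2
    · have : t.1 ∈ F := h1 ▸ hswapF u.1 hu1 t.2.1 t.2.2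
      have h2 := hmemF t.1 t.2
      rw [Prod.mk.eta] at h2
      exact h2.mpr this
    · by_cases h2 : t.1 = u.1
      · have : t.1 ∈ F := h2 ▸ hu1
        have h3 := hmemF t.1 t.2
        rw [Prod.mk.eta] at h3
        exact h3.mpr this
      · exfalso
        rw [if_neg h1, if_neg h2, add_zero, mul_zero] at hK
        exact lt_irrefl 0 hK
  -- every state of Ω reaches t0
  have hreach : ∀ u ∈ Omega V k, Reach G r εc β D u t0 := by
    intro u hu
    have hu1 : u.1 ∈ F := by
      have := hu
      rw [hΩ, Finset.mem_product] at this
      exact this.1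
    have ht01 : t0.1 ∈ F := by
      have := ht0Ω
      rw [hΩ, Finset.mem_product] at this
      exact this.1
    rw [hFdef, Finset.mem_filter] at hu1 ht01
    have := reach_aux G r εc β D hD (Fintype.card V) u.1 t0.1 hu1.1 ht01.1
      (by rw [hu1.2, ht01.2]) (le_trans (Finset.card_filter_le _ _) (le_refl _))
      u.2 t0.2
    simpa using this
  -- conclude ν ≡ 0 on Ω
  have hν_zero : ∀ u, Reach G r εc β D u t0 → u ∈ Omega V k → ν u = 0 := by
    intro u hru
    induction hru using Relation.ReflTransGen.head_induction_on with
    | refl => intro _; exact hν_t0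
    | head hstep htail ih =>
        intro huΩ
        rename_i a b
        have hbΩ : b ∈ Omega V k := hsupport a huΩ b hstep
        exact hprop b hbΩ (ih hbΩ) a huΩ hstep
  have hPρ : ∀ u ∈ Omega V k, P u = c * ρ u := by
    intro u hu
    have h0 : P u - c * ρ u = 0 := hν_zero u (hreach u hu) hu
    linarith
  -- c = 1
  have hc1 : c = 1 := by
    have h1 : ∑ t ∈ Omega V k, P t = c * ∑ t ∈ Omega V k, ρ t := by
      rw [Finset.mul_sum]
      exact Finset.sum_congr rfl hPρ
    rw [hsum, hρ_sum, mul_one] at h1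
    exact h1.symm
  have hPs : P s = m s.2 * gib G r β s.1 / Z := by
    have := hPρ s hs
    rw [hc1, one_mul, hρdef] at this
    exact this
  -- final bound
  rw [hPs, div_le_div_iff₀ hZpos (gib_pos G r β x')]
  have hA : m s.2 * (gib G r β s.1 * gib G r β x') ≤ gib G r β s.1 * gib G r β x' :=
    mul_le_of_le_one_left
      (mul_nonneg (gib_pos G r β s.1).le (gib_pos G r β x').le) (hm_le_one s.2)
  have hB : gib G r β s.1 * gib G r β x' ≤ gib G r β s.1 * Z :=
    mul_le_mul_of_nonneg_left hZge (gib_pos G r β s.1).le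
  calc m s.2 * gib G r β s.1 * gib G r β x'
      = m s.2 * (gib G r β s.1 * gib G r β x') := by ring
    _ ≤ gib G r β s.1 * gib G r β x' := hA
    _ ≤ gib G r β s.1 * Z := hB

end MainBound

/-- In Schelling's segregation model with Markovian contagion on the
`N × N` torus, every stochastically stable state of `Ω_k` has a maximally segregated
coloring. -/
theorem stochastically_stable_is_maximally_segregated
    (N : ℕ) [NeZero N] (hN : 2 ≤ N) (r : ℝ) (hr : 0 < r)
    (εc : ZMod N × ZMod N → ℝ)
    (D : ((ZMod N × ZMod N) × (ZMod N × ZMod N)) →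
         ((ZMod N × ZMod N) × (ZMod N × ZMod N)) → ℝ)
    (hD : IsScheduler D)
    (k : ℕ) (hk : k ≤ N ^ 2)
    (π : ℝ → (((ZMod N × ZMod N) → ℤ) ×
              ((ZMod N × ZMod N) × (ZMod N × ZMod N))) → ℝ)
    -- for each β > 0, `π β` is the stationary distribution of `M_β` restricted to `Ω_k`
    (hπ : ∀ β > (0 : ℝ),
      (∀ s, 0 ≤ π β s) ∧
      (∑ s ∈ Omega (ZMod N × ZMod N) k, π β s = 1) ∧
      (∀ s ∉ Omega (ZMod N × ZMod N) k, π β s = 0) ∧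
      (∀ t ∈ Omega (ZMod N × ZMod N) k,
        ∑ s ∈ Omega (ZMod N × ZMod N) k,
          π β s * kernel (torus N) r εc D β s t = π β t))
    (s : ((ZMod N × ZMod N) → ℤ) × ((ZMod N × ZMod N) × (ZMod N × ZMod N)))
    (hs : s ∈ Omega (ZMod N × ZMod N) k)
    -- `s` is stochastically stable
    (hstable : 0 < Filter.liminf (fun β => π β s) Filter.atTop) :
    MaximallySegregated (torus N) s.1 := by
  classical
  set G : SimpleGraph (ZMod N × ZMod N) := torus N with hGdef
  by_contra hcon
  unfold MaximallySegregated at hcon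
  push_neg at hcon
  obtain ⟨x', hx'col, hx'cnt, hx'lt⟩ := hcon
  -- facts about s
  have hs' := hs
  rw [Omega, Finset.mem_product, Finset.mem_filter] at hs'
  have hscol : s.1 ∈ colorings (ZMod N × ZMod N) := hs'.1.1
  have hsk : plusCount s.1 = k := hs'.1.2
  have hx'c : x' ∈ colorings (ZMod N × ZMod N) := (mem_colorings_iff x').mpr hx'col
  have hx'k : plusCount x' = k := hx'cnt.trans hsk
  -- gap in ocount
  have hOgap : ocount G x' + 2 ≤ ocount G s.1 := by
    rw [ocount_eq_twice_bichrom, ocount_eq_twice_bichrom]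
    omega
  -- the per-β bound
  have hbound : ∀ β : ℝ, 0 < β → π β s ≤ Real.exp (-(2 * r) * β) := by
    intro β hβ
    obtain ⟨hpos, hsum, _, hstat⟩ := hπ β hβ
    have h1 := pi_le_bound G r εc β D hD k (π β) hpos hsum hstat s hs x' hx'c hx'k
    have h2 : gib G r β s.1 / gib G r β x'
        = Real.exp (β * r * ((ocount G x' : ℝ) - (ocount G s.1 : ℝ))) := by
      rw [gib, gib, ← Real.exp_sub]
      congr 1
      ring
    have hle : (ocount G x' : ℝ) - (ocount G s.1 : ℝ) ≤ -2 := by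
      have h5 : (ocount G x' : ℝ) + 2 ≤ (ocount G s.1 : ℝ) := by
        exact_mod_cast hOgap
      linarith
    have h3 : β * r * ((ocount G x' : ℝ) - (ocount G s.1 : ℝ)) ≤ -(2 * r) * β := by
      have h6 : 0 ≤ β * r := (mul_pos hβ hr).le
      nlinarith
    calc π β s ≤ gib G r β s.1 / gib G r β x' := h1
      _ = Real.exp (β * r * ((ocount G x' : ℝ) - (ocount G s.1 : ℝ))) := h2
      _ ≤ Real.exp (-(2 * r) * β) := Real.exp_le_exp.mpr h3
  -- the upper bound tends to 0
  have h4 : Tendsto (fun β : ℝ => -(2 * r) * β) atTop atBot := by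
    apply Filter.Tendsto.const_mul_atTop_of_neg
    · linarith
    · exact tendsto_id
  have htend : Tendsto (fun β : ℝ => Real.exp (-(2 * r) * β)) atTop (nhds 0) :=
    Real.tendsto_exp_atBot.comp h4
  have h0 : ∀ᶠ β : ℝ in atTop, 0 ≤ π β s :=
    (eventually_gt_atTop 0).mono fun β hβ => (hπ β hβ).1 s
  have hub : ∀ᶠ β : ℝ in atTop, π β s ≤ Real.exp (-(2 * r) * β) :=
    (eventually_gt_atTop 0).mono fun β hβ => hbound β hβ
  have hlim : Tendsto (fun β => π β s) atTop (nhds 0) :=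
    tendsto_of_tendsto_of_tendsto_of_le_of_le' tendsto_const_nhds htend h0 hub
  rw [hlim.liminf_eq] at hstable
  exact lt_irrefl 0 hstable

end Schelling
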